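/- Let ℓ be a prime and m, n ≥ 0 integers. Let u = (diag(ℓ^{a₁}, ℓ^{a₂}, ℓ^{a₃}, ℓ^{a₄}), diag(ℓ^{b₁}, ℓ^{b₂})) ∈ G(ℚ_ℓ), where a₁ ≥ a₂ ≥ a₃ ≥ a₄ ≥ 0 and b₁, b₂ ≥ 0 are integers with a₁ + a₄ = a₂ + a₃ = b₁ + b₂. Then u⁻¹ · K_{m,n} · u ∩ G(ℤ_ℓ) ⊆ K_{m,n}. -/

import Mathlib

open Pointwise

noncomputable section

/-- The ambient ring containing `G(ℚ_ℓ) = (GSp₄ ×_{GL₁} GL₂)(ℚ_ℓ)`: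
pairs of a 4×4 and a 2×2 matrix over `ℚ_ℓ`. -/
abbrev MG (p : ℕ) [Fact p.Prime] :=
  Matrix (Fin 4) (Fin 4) ℚ_[p] × Matrix (Fin 2) (Fin 2) ℚ_[p]

/-- The standard skew-symmetric matrix `J` defining `GSp₄`. -/
def Jmat (p : ℕ) [Fact p.Prime] : Matrix (Fin 4) (Fin 4) ℚ_[p] :=
  !![0, 0, 0, 1; 0, 0, 1, 0; 0, -1, 0, 0; -1, 0, 0, 0]

/-- `G(ℤ_ℓ)`: pairs `(g, h)` with `g ∈ GSp₄(ℤ_ℓ)`, `h ∈ GL₂(ℤ_ℓ)` and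
`μ(g) = det h`. -/
def GZ (p : ℕ) [Fact p.Prime] : Set (MG p) :=
  {x | (∀ i j, ‖x.1 i j‖ ≤ 1) ∧ (∀ i j, ‖x.2 i j‖ ≤ 1) ∧
    ‖x.1.det‖ = 1 ∧ ‖x.2.det‖ = 1 ∧
    x.1.transpose * Jmat p * x.1 = x.2.det • Jmat p}

/-- The subgroup `K_{m,n}` of `G(ℤ_ℓ)`: pairs `(g, h)` with `μ(g) ≡ 1 (mod ℓ^m)` and the
entries of `g` at positions (2,1), (3,1), (4,1), (4,2), (4,3) divisible by `ℓⁿ`. -/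
def Kmn (p : ℕ) [Fact p.Prime] (m n : ℕ) : Set (MG p) :=
  {x ∈ GZ p | ‖x.2.det - 1‖ ≤ (p : ℝ) ^ (-(m : ℤ)) ∧
    ‖x.1 1 0‖ ≤ (p : ℝ) ^ (-(n : ℤ)) ∧ ‖x.1 2 0‖ ≤ (p : ℝ) ^ (-(n : ℤ)) ∧
    ‖x.1 3 0‖ ≤ (p : ℝ) ^ (-(n : ℤ)) ∧ ‖x.1 3 1‖ ≤ (p : ℝ) ^ (-(n : ℤ)) ∧
    ‖x.1 3 2‖ ≤ (p : ℝ) ^ (-(n : ℤ))}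

/-- The element `u = (diag(ℓ^{a₁}, ℓ^{a₂}, ℓ^{a₃}, ℓ^{a₄}), diag(ℓ^{b₁}, ℓ^{b₂}))`. -/
def uElt (p : ℕ) [Fact p.Prime] (a₁ a₂ a₃ a₄ b₁ b₂ : ℕ) : MG p :=
  (Matrix.diagonal ![(p : ℚ_[p]) ^ a₁, (p : ℚ_[p]) ^ a₂, (p : ℚ_[p]) ^ a₃,
      (p : ℚ_[p]) ^ a₄],
    Matrix.diagonal ![(p : ℚ_[p]) ^ b₁, (p : ℚ_[p]) ^ b₂])

/-- The inverse `u⁻¹ = (diag(ℓ^{-a₁}, ℓ^{-a₂}, ℓ^{-a₃}, ℓ^{-a₄}), diag(ℓ^{-b₁}, ℓ^{-b₂}))`. -/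
def uEltInv (p : ℕ) [Fact p.Prime] (a₁ a₂ a₃ a₄ b₁ b₂ : ℕ) : MG p :=
  (Matrix.diagonal ![(p : ℚ_[p]) ^ (-(a₁ : ℤ)), (p : ℚ_[p]) ^ (-(a₂ : ℤ)),
      (p : ℚ_[p]) ^ (-(a₃ : ℤ)), (p : ℚ_[p]) ^ (-(a₄ : ℤ))],
    Matrix.diagonal ![(p : ℚ_[p]) ^ (-(b₁ : ℤ)), (p : ℚ_[p]) ^ (-(b₂ : ℤ))])

lemma keyaux (p : ℕ) [Fact p.Prime] (n a b : ℕ) (hab : a ≤ b) (q : ℚ_[p])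
    (hq : ‖q‖ ≤ (p:ℝ) ^ (-(n:ℤ))) :
    ‖(p:ℚ_[p]) ^ (-(a:ℤ)) * q * (p:ℚ_[p]) ^ b‖ ≤ (p:ℝ) ^ (-(n:ℤ)) := by
  have hp1 : (1:ℝ) < p := by exact_mod_cast (Fact.out : p.Prime).one_lt
  have hp0 : (0:ℝ) < p := lt_trans one_pos hp1
  rw [norm_mul, norm_mul, Padic.norm_p_zpow, Padic.norm_p_pow, neg_neg]
  have e : (p:ℝ)^(a:ℤ) * ‖q‖ * (p:ℝ)^(-(b:ℤ)) = (p:ℝ)^((a:ℤ)-b) * ‖q‖ := by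
    rw [zpow_sub₀ hp0.ne', zpow_neg]; ring
  rw [e]
  have h1 : (p:ℝ)^((a:ℤ)-b) ≤ 1 := by
    calc (p:ℝ)^((a:ℤ)-b) ≤ (p:ℝ)^(0:ℤ) := zpow_le_zpow_right₀ hp1.le (by omega)
    _ = 1 := zpow_zero _
  calc (p:ℝ)^((a:ℤ)-b) * ‖q‖ ≤ 1 * ((p:ℝ) ^ (-(n:ℤ))) :=
        mul_le_mul h1 hq (norm_nonneg _) zero_le_one
    _ = _ := one_mul _

/-- For `u` an antidominant-type diagonal element of `G(ℚ_ℓ)`,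
`u⁻¹ · K_{m,n} · u ∩ G(ℤ_ℓ) ⊆ K_{m,n}`. -/
theorem stmt11 (p : ℕ) [Fact p.Prime] (m n : ℕ) (a₁ a₂ a₃ a₄ b₁ b₂ : ℕ)
    (h12 : a₂ ≤ a₁) (h23 : a₃ ≤ a₂) (h34 : a₄ ≤ a₃)
    (hsum1 : a₁ + a₄ = a₂ + a₃) (hsum2 : a₂ + a₃ = b₁ + b₂) :
    (({uEltInv p a₁ a₂ a₃ a₄ b₁ b₂} : Set (MG p)) * Kmn p m n *
        {uElt p a₁ a₂ a₃ a₄ b₁ b₂}) ∩ GZ p ⊆ Kmn p m n := by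
  rintro x ⟨hx1, hxGZ⟩
  obtain ⟨y, hy, z, hz, rfl⟩ := hx1
  obtain ⟨u, hu, k, hk, rfl⟩ := hy
  rw [Set.mem_singleton_iff] at hu hz
  subst hu; subst hz
  obtain ⟨hkGZ, hdet, h10, h20, h30, h31, h32⟩ := hk
  have hp : (p:ℚ_[p]) ≠ 0 := by
    exact_mod_cast (Nat.cast_ne_zero (R := ℚ_[p])).2 (Fact.out : p.Prime).ne_zero
  refine ⟨hxGZ, ?_, ?_, ?_, ?_, ?_, ?_⟩
  · have e2 : (uEltInv p a₁ a₂ a₃ a₄ b₁ b₂ * k * uElt p a₁ a₂ a₃ a₄ b₁ b₂).2.det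
        = k.2.det := by
      show (Matrix.diagonal _ * k.2 * Matrix.diagonal _).det = _
      rw [Matrix.det_mul, Matrix.det_mul, Matrix.det_diagonal, Matrix.det_diagonal]
      simp only [Fin.prod_univ_two, Matrix.cons_val_zero, Matrix.cons_val_one,
        Matrix.head_cons]
      rw [zpow_neg, zpow_neg, zpow_natCast, zpow_natCast]
      field_simp
    rw [e2]; exact hdet
  all_goals
    simp only [uEltInv, uElt, Prod.fst_mul, Matrix.mul_diagonal, Matrix.diagonal_mul,
      Matrix.cons_val_zero, Matrix.cons_val_one, Matrix.head_cons,
      Matrix.cons_val_two, Matrix.tail_cons, Matrix.cons_val_three, Matrix.head_fin_const]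
  · exact keyaux p n a₂ a₁ h12 _ h10
  · exact keyaux p n a₃ a₁ (le_trans h23 h12) _ h20
  · exact keyaux p n a₄ a₁ (le_trans h34 (le_trans h23 h12)) _ h30
  · exact keyaux p n a₄ a₂ (le_trans h34 h23) _ h31
  · exact keyaux p n a₄ a₃ h34 _ h32
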